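/- Let k be a number field of degree n = [k:ℚ]. There exists ε > 0 such that for all real weights x = (x_v)_v indexed by the infinite places of k with ∑_v x_v = 0 and |x_v| < ε for every v, and every nonzero f ∈ 𝒪_k, one has Q_x(f) ≥ ∑_{v real} e^{−2x_v} + 2·∑_{v complex} e^{−x_v}, with equality if and only if f is a root of unity (f^m = 1 for some integer m ≥ 1). -/

import Mathlib

open NumberField Finset
open scoped Classical

variable (k : Type*) [Field k] [NumberField k]

/-- `Q_x(f) = ∑_{v real} |f|_v² e^{-2 x_v} + 2 ∑_{v complex} |f|_v² e^{-x_v}`. -/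
noncomputable def arakelovQ (x : InfinitePlace k → ℝ) (f : k) : ℝ :=
  ∑ v : InfinitePlace k,
    if v.IsReal then (v f) ^ 2 * Real.exp (-2 * x v)
    else 2 * (v f) ^ 2 * Real.exp (-(x v))

namespace ArakelovAux

variable {k}

lemma exp_le_one_add_two_mul {t : ℝ} (h0 : 0 ≤ t) (h : t ≤ 1/2) :
    Real.exp t ≤ 1 + 2 * t := by
  have h1 : 1 - t ≤ Real.exp (-t) := by
    have := Real.add_one_le_exp (-t); linarith
  have h2 : (0:ℝ) < 1 - t := by linarith
  have h3 : Real.exp t ≤ (1 - t)⁻¹ := by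
    rw [← inv_inv (Real.exp t), ← Real.exp_neg t]
    exact inv_anti₀ h2 h1
  refine h3.trans ?_
  rw [inv_eq_one_div, div_le_iff₀ h2]
  nlinarith

lemma allOne_of_rootOfUnity {f : 𝓞 k} {m : ℕ} (hm : 1 ≤ m) (h : f ^ m = 1)
    (v : InfinitePlace k) : v (f : k) = 1 := by
  have h1 : (v (f : k)) ^ m = 1 := by
    rw [← map_pow v]
    have hc : ((f : k)) ^ m = ((f ^ m : 𝓞 k) : k) := by push_cast; ring
    rw [hc, h]
    push_cast
    exact map_one v
  have h0 : 0 ≤ v (f : k) := apply_nonneg v _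
  rcases lt_trichotomy (v (f : k)) 1 with hl | he | hg
  · exfalso
    have := pow_lt_one₀ h0 hl (by omega : m ≠ 0)
    rw [h1] at this; exact lt_irrefl 1 this
  · exact he
  · exfalso
    have := one_lt_pow₀ hg (by omega : m ≠ 0)
    rw [h1] at this; exact lt_irrefl 1 this

lemma rootOfUnity_of_allOne {f : 𝓞 k} (h : ∀ v : InfinitePlace k, v (f : k) = 1) :
    ∃ m : ℕ, 1 ≤ m ∧ f ^ m = 1 := by
  obtain ⟨m, hm, hfm⟩ := NumberField.Embeddings.pow_eq_one_of_norm_eq_one k ℂ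
    (RingOfIntegers.isIntegral_coe f)
    ((InfinitePlace.eq_iff_eq (f : k) 1).mp h)
  refine ⟨m, hm, ?_⟩
  have hcoe : ((f ^ m : 𝓞 k) : k) = ((1 : 𝓞 k) : k) := by push_cast; rw [hfm]
  exact RingOfIntegers.coe_injective hcoe

lemma one_le_abs_norm {f : 𝓞 k} (hf : f ≠ 0) :
    (1 : ℝ) ≤ |(Algebra.norm ℚ) (f : k)| := by
  have h : (1:ℚ) ≤ |(Algebra.norm ℚ) (f : k)| := by
    rw [← Algebra.coe_norm_int, ← Int.cast_one, ← Int.cast_abs, Int.cast_le]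
    exact Int.one_le_abs (Algebra.norm_ne_zero_iff.mpr hf)
  calc (1:ℝ) = ((1:ℚ):ℝ) := by norm_num
    _ ≤ ((|(Algebra.norm ℚ) (f : k)| : ℚ) : ℝ) := by exact_mod_cast h
    _ = |(Algebra.norm ℚ) (f : k)| := by push_cast; ring

end ArakelovAux

open ArakelovAux

set_option maxHeartbeats 1600000 in
theorem arakelovQ_min_near_zero :
    ∃ ε > (0 : ℝ), ∀ x : InfinitePlace k → ℝ,
      (∑ v : InfinitePlace k, x v = 0) → (∀ v : InfinitePlace k, |x v| < ε) →
      ∀ f : 𝓞 k, f ≠ 0 →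
        (∑ v : InfinitePlace k,
            if v.IsReal then Real.exp (-2 * x v) else 2 * Real.exp (-(x v)))
          ≤ arakelovQ k x (f : k) ∧
        (arakelovQ k x (f : k) =
            (∑ v : InfinitePlace k,
              if v.IsReal then Real.exp (-2 * x v) else 2 * Real.exp (-(x v))) ↔
          ∃ m : ℕ, 1 ≤ m ∧ f ^ m = 1) := by
  classical
  set n' : ℕ := Fintype.card (InfinitePlace k) with hn'
  set B : ℝ := Real.sqrt (1 + 16 * n') with hBdef
  have hBsq : B ^ 2 = 1 + 16 * n' := Real.sq_sqrt (by positivity)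
  have hBnonneg : 0 ≤ B := Real.sqrt_nonneg _
  set S : Set (𝓞 k) :=
    {f | f ≠ 0 ∧ (∀ v : InfinitePlace k, v (f : k) ≤ B) ∧ ¬ ∃ m : ℕ, 1 ≤ m ∧ f ^ m = 1}
    with hSdef
  have hSfin : S.Finite := by
    have hT := NumberField.Embeddings.finite_of_norm_le k ℂ B
    have hsub : S ⊆ (fun f : 𝓞 k => (f : k)) ⁻¹'
        {x : k | IsIntegral ℤ x ∧ ∀ φ : k →+* ℂ, ‖φ x‖ ≤ B} := by
      rintro f ⟨hf0, hfB, -⟩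
      exact ⟨RingOfIntegers.isIntegral_coe f, (InfinitePlace.le_iff_le (f : k) B).mp hfB⟩
    exact (hT.preimage (RingOfIntegers.coe_injective.injOn)).subset hsub
  set a : 𝓞 k → InfinitePlace k → ℝ := fun f v => (v (f : k)) ^ 2 with hadef
  set G : 𝓞 k → ℝ :=
    fun f => ∑ v : InfinitePlace k,
      (InfinitePlace.mult v : ℝ) * (a f v - 1 - Real.log (a f v)) with hGdef
  set H : 𝓞 k → ℝ :=
    fun f => ∑ v : InfinitePlace k,
      (InfinitePlace.mult v : ℝ) * |Real.log (a f v)| with hHdef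
  set F : Finset (𝓞 k) := hSfin.toFinset with hFdef
  set δ : ℝ := (insert (1:ℝ) (F.image G)).min' (Finset.insert_nonempty _ _) with hδdef
  set M : ℝ := (insert (0:ℝ) (F.image H)).max' (Finset.insert_nonempty _ _) with hMdef
  have hψ : ∀ t : ℝ, 0 < t → 0 ≤ t - 1 - Real.log t := by
    intro t ht; have := Real.log_le_sub_one_of_pos ht; linarith
  have hψs : ∀ t : ℝ, 0 < t → t ≠ 1 → 0 < t - 1 - Real.log t := by
    intro t ht ht1; have := Real.log_lt_sub_one_of_pos ht ht1; linarith
  have hmult1 : ∀ v : InfinitePlace k, (1:ℝ) ≤ (InfinitePlace.mult v : ℝ) := by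
    intro v; exact_mod_cast InfinitePlace.mult_pos
  have hapos : ∀ (f : 𝓞 k), f ≠ 0 → ∀ v : InfinitePlace k, 0 < a f v := by
    intro f hf v
    have hne : (f : k) ≠ 0 := RingOfIntegers.coe_ne_zero_iff.mpr hf
    exact pow_pos (InfinitePlace.pos_iff.mpr hne) 2
  have haone : ∀ (f : 𝓞 k), ∀ v : InfinitePlace k, a f v = 1 → v (f : k) = 1 := by
    intro f v hv
    have h0 : 0 ≤ v (f : k) := apply_nonneg v _
    have hfac : (v (f : k) - 1) * (v (f : k) + 1) = 0 := by
      have h2 : (v (f : k)) ^ 2 = 1 := hv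
      nlinarith
    rcases mul_eq_zero.mp hfac with h | h
    · linarith
    · linarith
  have hδpos : 0 < δ := by
    rw [hδdef]
    apply (Finset.lt_min'_iff _ _).mpr
    intro b hb
    rcases Finset.mem_insert.mp hb with rfl | hb
    · norm_num
    · obtain ⟨f, hfF, rfl⟩ := Finset.mem_image.mp hb
      have hfS : f ∈ S := hSfin.mem_toFinset.mp hfF
      obtain ⟨hf0, hfB, hfnru⟩ := hfS
      have hex : ∃ v : InfinitePlace k, v (f : k) ≠ 1 := by
        by_contra hall; push_neg at hall
        exact hfnru (rootOfUnity_of_allOne hall)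
      obtain ⟨v0, hv0⟩ := hex
      apply Finset.sum_pos'
      · intro v _
        exact mul_nonneg (by positivity) (hψ _ (hapos f hf0 v))
      · refine ⟨v0, Finset.mem_univ _, ?_⟩
        refine mul_pos (by exact_mod_cast InfinitePlace.mult_pos) (hψs _ (hapos f hf0 v0) ?_)
        intro h1; exact hv0 (haone f v0 h1)
  have hM0 : 0 ≤ M := Finset.le_max' _ _ (Finset.mem_insert_self _ _)
  have hδle : ∀ g ∈ F, δ ≤ G g := fun g hg =>
    Finset.min'_le _ _ (Finset.mem_insert_of_mem (Finset.mem_image_of_mem _ hg))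
  have hMge : ∀ g ∈ F, H g ≤ M := fun g hg =>
    Finset.le_max' _ _ (Finset.mem_insert_of_mem (Finset.mem_image_of_mem _ hg))
  clear hδdef hMdef
  clear_value δ M
  set ε : ℝ := min (1/4) (δ / (8 * (M + 1))) with hεdef
  have hεpos : 0 < ε := lt_min (by norm_num) (div_pos hδpos (by linarith))
  refine ⟨ε, hεpos, ?_⟩
  intro x _ hxε f hf0
  have hx4 : ∀ v : InfinitePlace k, |x v| < 1/4 :=
    fun v => lt_of_lt_of_le (hxε v) (min_le_left _ _)
  have hxδ : ∀ v : InfinitePlace k, |x v| ≤ δ / (8 * (M + 1)) :=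
    fun v => le_of_lt (lt_of_lt_of_le (hxε v) (min_le_right _ _))
  set c : InfinitePlace k → ℝ :=
    fun v => if v.IsReal then Real.exp (-2 * x v) else 2 * Real.exp (-(x v)) with hcdef
  have hQ : arakelovQ k x (f : k) = ∑ v : InfinitePlace k, c v * a f v := by
    unfold arakelovQ
    refine Finset.sum_congr rfl fun v _ => ?_
    by_cases h : v.IsReal <;> simp only [hcdef, hadef, h, if_true, if_false] <;> ring
  have hR : (∑ v : InfinitePlace k,
      if v.IsReal then Real.exp (-2 * x v) else 2 * Real.exp (-(x v)))
      = ∑ v : InfinitePlace k, c v := rfl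
  have hcpos : ∀ v : InfinitePlace k, 0 < c v := by
    intro v; rw [hcdef]
    by_cases h : v.IsReal <;> simp only [h, if_true, if_false] <;> positivity
  have hexpub : ∀ v : InfinitePlace k, Real.exp (|x v|) ≤ 1 + 2 * |x v| :=
    fun v => exp_le_one_add_two_mul (abs_nonneg _) (by have := hx4 v; linarith)
  have hexpub2 : ∀ v : InfinitePlace k, Real.exp (2 * |x v|) ≤ 1 + 4 * |x v| := by
    intro v
    have h := exp_le_one_add_two_mul (t := 2 * |x v|)
      (by positivity) (by have := hx4 v; linarith [abs_nonneg (x v)])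
    linarith
  have hub1 : ∀ v : InfinitePlace k, Real.exp (-2 * x v) ≤ 1 + 4 * |x v| := by
    intro v
    refine le_trans (Real.exp_le_exp.mpr ?_) (hexpub2 v)
    have := neg_abs_le (x v); linarith
  have hub2 : ∀ v : InfinitePlace k, Real.exp (-(x v)) ≤ 1 + 2 * |x v| := by
    intro v
    refine le_trans (Real.exp_le_exp.mpr ?_) (hexpub v)
    have := neg_abs_le (x v); linarith
  have hlb1 : ∀ v : InfinitePlace k, 1 - 2 * |x v| ≤ Real.exp (-2 * x v) := by
    intro v
    have h := Real.add_one_le_exp (-2 * x v)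
    have := le_abs_self (x v); linarith
  have hlb2 : ∀ v : InfinitePlace k, 1 - |x v| ≤ Real.exp (-(x v)) := by
    intro v
    have h := Real.add_one_le_exp (-(x v))
    have := le_abs_self (x v); linarith
  have hchalf : ∀ v : InfinitePlace k, (InfinitePlace.mult v : ℝ) / 2 ≤ c v := by
    intro v
    rw [hcdef, InfinitePlace.mult]
    by_cases h : v.IsReal <;> simp only [h, if_true, if_false]
    · have := hlb1 v; have := hx4 v; push_cast; linarith
    · have := hlb2 v; have := hx4 v; push_cast; linarith
  have hcle4 : ∀ v : InfinitePlace k, c v ≤ 4 := by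
    intro v
    rw [hcdef]
    by_cases h : v.IsReal <;> simp only [h, if_true, if_false]
    · have := hub1 v; have := hx4 v; linarith
    · have := hub2 v; have := hx4 v; linarith
  have hcclose : ∀ v : InfinitePlace k, |c v - (InfinitePlace.mult v : ℝ)| ≤ 4 * |x v| := by
    intro v
    rw [hcdef, InfinitePlace.mult]
    by_cases h : v.IsReal <;> simp only [h, if_true, if_false] <;>
        rw [abs_le] <;> push_cast <;> constructor
    · have := hlb1 v; linarith [abs_nonneg (x v)]
    · have := hub1 v; linarith
    · have := hlb2 v; linarith [abs_nonneg (x v)]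
    · have := hub2 v; linarith [abs_nonneg (x v)]
  have hvne : ∀ v : InfinitePlace k, v (f : k) ≠ 0 := fun v =>
    ne_of_gt (InfinitePlace.pos_iff.mpr (RingOfIntegers.coe_ne_zero_iff.mpr hf0))
  have hnormsum : 0 ≤ ∑ v : InfinitePlace k, (InfinitePlace.mult v : ℝ) * Real.log (a f v) := by
    have hlogsum : ∑ v : InfinitePlace k, (InfinitePlace.mult v : ℝ) * Real.log (a f v)
        = 2 * Real.log (∏ v : InfinitePlace k, (v (f : k)) ^ (InfinitePlace.mult v)) := by
      rw [Real.log_prod (fun v _ => pow_ne_zero _ (hvne v)), Finset.mul_sum]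
      refine Finset.sum_congr rfl fun v _ => ?_
      rw [hadef]
      simp only [Real.log_pow]
      push_cast; ring
    rw [hlogsum, InfinitePlace.prod_eq_abs_norm]
    have h1 := one_le_abs_norm (k := k) hf0
    have := Real.log_nonneg h1
    linarith
  have hstrict : (¬ ∃ m : ℕ, 1 ≤ m ∧ f ^ m = 1) →
      (∑ v : InfinitePlace k, c v) < ∑ v : InfinitePlace k, c v * a f v := by
    intro hnru
    rw [← sub_pos, ← Finset.sum_sub_distrib]
    have hgap : ∀ v ∈ (Finset.univ : Finset (InfinitePlace k)),
        c v * a f v - c v = c v * (a f v - 1) := fun v _ => by ring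
    rw [Finset.sum_congr rfl hgap]
    by_cases hcase : ∀ v : InfinitePlace k, v (f : k) ≤ B
    · -- f lies in the finite bad set
      have hfF : f ∈ F := hSfin.mem_toFinset.mpr ⟨hf0, hcase, hnru⟩
      have hδG : δ ≤ G f := hδle f hfF
      have hHM : H f ≤ M := hMge f hfF
      have hdecomp : ∑ v : InfinitePlace k, c v * (a f v - 1)
          = (∑ v : InfinitePlace k, c v * (a f v - 1 - Real.log (a f v)))
            + (∑ v : InfinitePlace k, (InfinitePlace.mult v : ℝ) * Real.log (a f v))
            + (∑ v : InfinitePlace k,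
                (c v - (InfinitePlace.mult v : ℝ)) * Real.log (a f v)) := by
        rw [← Finset.sum_add_distrib, ← Finset.sum_add_distrib]
        exact Finset.sum_congr rfl fun v _ => by ring
      have h1 : G f / 2 ≤ ∑ v : InfinitePlace k, c v * (a f v - 1 - Real.log (a f v)) := by
        have hGf : G f = ∑ v : InfinitePlace k,
            (InfinitePlace.mult v : ℝ) * (a f v - 1 - Real.log (a f v)) := rfl
        rw [hGf, Finset.sum_div]
        refine Finset.sum_le_sum fun v _ => ?_
        have hψv := hψ _ (hapos f hf0 v)
        have := hchalf v
        nlinarith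
      set ε₀ : ℝ := δ / (8 * (M + 1)) with hε₀def
      have hε₀pos : 0 < ε₀ := div_pos hδpos (by linarith)
      have h3 : -(4 * ε₀ * H f) ≤
          ∑ v : InfinitePlace k, (c v - (InfinitePlace.mult v : ℝ)) * Real.log (a f v) := by
        have hterm : ∀ v ∈ (Finset.univ : Finset (InfinitePlace k)),
            -(4 * ε₀ * ((InfinitePlace.mult v : ℝ) * |Real.log (a f v)|)) ≤
              (c v - (InfinitePlace.mult v : ℝ)) * Real.log (a f v) := by
          intro v _
          have h1' : |(c v - (InfinitePlace.mult v : ℝ)) * Real.log (a f v)| ≤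
              4 * ε₀ * ((InfinitePlace.mult v : ℝ) * |Real.log (a f v)|) := by
            rw [abs_mul]
            have hc' : |c v - (InfinitePlace.mult v : ℝ)| ≤ 4 * ε₀ := by
              refine le_trans (hcclose v) ?_
              have := hxδ v; linarith
            have hm := hmult1 v
            have hl := abs_nonneg (Real.log (a f v))
            calc |c v - (InfinitePlace.mult v : ℝ)| * |Real.log (a f v)|
                ≤ (4 * ε₀) * |Real.log (a f v)| := mul_le_mul_of_nonneg_right hc' hl
              _ ≤ 4 * ε₀ * ((InfinitePlace.mult v : ℝ) * |Real.log (a f v)|) := by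
                  nlinarith [mul_nonneg (mul_nonneg (by linarith : (0:ℝ) ≤ 4 * ε₀)
                    (by linarith : (0:ℝ) ≤ (InfinitePlace.mult v : ℝ) - 1)) hl]
          have := neg_abs_le ((c v - (InfinitePlace.mult v : ℝ)) * Real.log (a f v))
          linarith
        have hsum := Finset.sum_le_sum hterm
        rw [Finset.sum_neg_distrib, ← Finset.mul_sum] at hsum
        have hHf : H f = ∑ v : InfinitePlace k,
            (InfinitePlace.mult v : ℝ) * |Real.log (a f v)| := rfl
        rw [hHf]
        exact hsum
      have h4 : 4 * ε₀ * H f ≤ 4 * ε₀ * M := by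
        nlinarith [mul_nonneg hε₀pos.le (sub_nonneg.mpr hHM)]
      have hkey : ε₀ * (8 * (M + 1)) = δ := by
        rw [hε₀def]
        exact div_mul_cancel₀ δ (ne_of_gt (by linarith : (0:ℝ) < 8 * (M + 1)))
      nlinarith [hdecomp, h1, hnormsum, h3, h4, hδG]
    · -- f has a large place
      push_neg at hcase
      obtain ⟨v0, hv0⟩ := hcase
      have hn'pos : 0 < n' := by
        rw [hn']; exact Fintype.card_pos_iff.mpr ⟨v0⟩
      have ha0 : 1 + 16 * (n' : ℝ) < a f v0 := by
        rw [← hBsq, hadef]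
        exact pow_lt_pow_left₀ hv0 hBnonneg (by norm_num)
      rw [← Finset.add_sum_erase _ (fun v => c v * (a f v - 1)) (Finset.mem_univ v0)]
      have hn'0 : (0:ℝ) ≤ 16 * (n' : ℝ) := by positivity
      have hterm : 8 * (n' : ℝ) < c v0 * (a f v0 - 1) := by
        have hc0 : (1:ℝ)/2 ≤ c v0 := le_trans (by linarith [hmult1 v0]) (hchalf v0)
        have h16 : (16:ℝ) * n' < a f v0 - 1 := by linarith
        have hmm : (1/2 : ℝ) * (a f v0 - 1) ≤ c v0 * (a f v0 - 1) :=
          mul_le_mul_of_nonneg_right hc0 (by linarith)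
        linarith
      have hrest : -(4 * (n' : ℝ)) ≤ ∑ v ∈ Finset.univ.erase v0, c v * (a f v - 1) := by
        have hper : ∀ v ∈ Finset.univ.erase v0, (-4:ℝ) ≤ c v * (a f v - 1) := by
          intro v _
          have h1 : 0 ≤ c v * a f v := mul_nonneg (hcpos v).le (hapos f hf0 v).le
          have := hcle4 v
          nlinarith
        calc -(4 * (n' : ℝ)) ≤ -(4 * ((Finset.univ.erase v0).card : ℝ)) := by
              have hcard : ((Finset.univ.erase v0).card : ℝ) ≤ (n' : ℝ) := by
                have := Finset.card_erase_le (s := (Finset.univ : Finset (InfinitePlace k)))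
                  (a := v0)
                rw [hn']
                exact_mod_cast le_trans this (le_of_eq (Finset.card_univ))
              linarith
          _ = ∑ _v ∈ Finset.univ.erase v0, (-4:ℝ) := by
              rw [Finset.sum_const, nsmul_eq_mul]; ring
          _ ≤ _ := Finset.sum_le_sum hper
      have hn1 : (1:ℝ) ≤ (n' : ℝ) := by exact_mod_cast hn'pos
      linarith
  by_cases hru : ∃ m : ℕ, 1 ≤ m ∧ f ^ m = 1
  · obtain ⟨m, hm, hfm⟩ := hru
    have hall : ∀ v : InfinitePlace k, v (f : k) = 1 :=
      fun v => allOne_of_rootOfUnity hm hfm v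
    have haf : ∀ v : InfinitePlace k, a f v = 1 := by
      intro v; rw [hadef]; simp [hall v]
    have heq : arakelovQ k x (f : k) = ∑ v : InfinitePlace k, c v := by
      rw [hQ]
      exact Finset.sum_congr rfl fun v _ => by rw [haf v, mul_one]
    rw [hR]
    exact ⟨le_of_eq heq.symm, ⟨fun _ => ⟨m, hm, hfm⟩, fun _ => heq⟩⟩
  · have hlt := hstrict hru
    rw [hR, hQ]
    exact ⟨hlt.le, ⟨fun h => absurd h.symm (ne_of_lt hlt), fun h => absurd h hru⟩⟩
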